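/- In the setting where Π T^γ is a β-contraction in L²(π) with unique fixed point θ*ᵀΦ, for any θ ≠ θ* in ℝ^d (with Φ having linearly independent coordinates in L²(π)), (θ − θ*)ᵀ E_π[ Φ(S)( C + β θᵀΦ(S₁) − θᵀΦ(S) ) ] ≤ (β − 1) ‖(θ − θ*)ᵀΦ(S)‖²_{L²(π)} < 0. -/

import Mathlib

open MeasureTheory

private lemma l2_mul_integrable {Ω : Type*} [MeasurableSpace Ω] {P : Measure Ω}
    {f g : Ω → ℝ} (hf : MemLp f 2 P) (hg : MemLp g 2 P) :
    Integrable (fun ω => f ω * g ω) P := by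
  have h1 := hf.integrable_sq
  have h2 := hg.integrable_sq
  have hm : AEStronglyMeasurable (fun ω => f ω * g ω) P :=
    hf.aestronglyMeasurable.mul hg.aestronglyMeasurable
  refine ((h1.add h2).const_mul (1/2)).mono' hm (Filter.Eventually.of_forall fun ω => ?_)
  simp only [Pi.add_apply, norm_mul, Real.norm_eq_abs]
  nlinarith [sq_nonneg (|f ω| - |g ω|), sq_abs (f ω), sq_abs (g ω)]

theorem stmt_17 {Ω 𝕊 : Type*} [MeasurableSpace Ω] [MeasurableSpace 𝕊]
    (P : Measure Ω) [IsProbabilityMeasure P]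
    -- `(S, C, S₁)` jointly distributed with equal marginals on `S` and `S₁`:
    (S S₁ : Ω → 𝕊) (C : Ω → ℝ)
    (hS : Measurable S) (hS₁ : Measurable S₁) (hC : Measurable C)
    (hstat : P.map S = P.map S₁)
    (β : ℝ) (hβ0 : 0 < β) (hβ1 : β < 1)
    {d : ℕ} (φ : Fin d → 𝕊 → ℝ) (hφ : ∀ i, Measurable (φ i))
    (hφS : ∀ i, MemLp (fun ω => φ i (S ω)) 2 P)
    (hφS₁ : ∀ i, MemLp (fun ω => φ i (S₁ ω)) 2 P)
    (hCL2 : MemLp C 2 P)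
    -- linear independence of the basis functions in `L²(π)`:
    (hindep : ∀ v : Fin d → ℝ, v ≠ 0 → 0 < ∫ ω, (∑ i, v i * φ i (S ω)) ^ 2 ∂P)
    -- `θ*ᵀΦ` is the fixed point of `Π T^γ`, expressed via the first-order
    -- (orthogonality) condition of the projection:
    (θstar : Fin d → ℝ)
    (hfix : ∀ i, ∫ ω, φ i (S ω) *
      (C ω + β * (∑ j, θstar j * φ j (S₁ ω)) - ∑ j, θstar j * φ j (S ω)) ∂P = 0)
    (θ : Fin d → ℝ) (hθ : θ ≠ θstar) :
    (∑ i, (θ i - θstar i) * ∫ ω, φ i (S ω) *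
        (C ω + β * (∑ j, θ j * φ j (S₁ ω)) - ∑ j, θ j * φ j (S ω)) ∂P)
      ≤ (β - 1) * ∫ ω, (∑ i, (θ i - θstar i) * φ i (S ω)) ^ 2 ∂P ∧
    (β - 1) * ∫ ω, (∑ i, (θ i - θstar i) * φ i (S ω)) ^ 2 ∂P < 0 := by
  set v : Fin d → ℝ := fun i => θ i - θstar i with hv_def
  have hv : v ≠ 0 := by
    intro h
    apply hθ
    funext i
    have : v i = 0 := by rw [h]; rfl
    simpa [hv_def, sub_eq_zero] using this
  set f : Ω → ℝ := fun ω => ∑ i, v i * φ i (S ω) with hf_def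
  set g : Ω → ℝ := fun ω => ∑ i, v i * φ i (S₁ ω) with hg_def
  -- L² membership of linear combinations
  have hlinS : ∀ w : Fin d → ℝ, MemLp (fun ω => ∑ j, w j * φ j (S ω)) 2 P := by
    intro w
    have := memLp_finset_sum' (Finset.univ : Finset (Fin d))
      (fun j _ => (hφS j).const_mul (w j))
    simpa [Finset.sum_fn] using this
  have hlinS₁ : ∀ w : Fin d → ℝ, MemLp (fun ω => ∑ j, w j * φ j (S₁ ω)) 2 P := by
    intro w
    have := memLp_finset_sum' (Finset.univ : Finset (Fin d))
      (fun j _ => (hφS₁ j).const_mul (w j))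
    simpa [Finset.sum_fn] using this
  have hfL2 : MemLp f 2 P := hlinS v
  have hgL2 : MemLp g 2 P := hlinS₁ v
  -- integrability of the integrands
  have hint : ∀ (w : Fin d → ℝ) i, Integrable (fun ω => φ i (S ω) *
      (C ω + β * (∑ j, w j * φ j (S₁ ω)) - ∑ j, w j * φ j (S ω))) P := by
    intro w i
    exact l2_mul_integrable (hφS i)
      ((hCL2.add ((hlinS₁ w).const_mul β)).sub (hlinS w))
  -- per-coordinate difference identity
  have step : ∀ i, (∫ ω, φ i (S ω) *
      (C ω + β * (∑ j, θ j * φ j (S₁ ω)) - ∑ j, θ j * φ j (S ω)) ∂P)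
      = ∫ ω, φ i (S ω) * (β * g ω - f ω) ∂P := by
    intro i
    have h1 := hint θ i
    have h2 := hint θstar i
    calc (∫ ω, φ i (S ω) *
        (C ω + β * (∑ j, θ j * φ j (S₁ ω)) - ∑ j, θ j * φ j (S ω)) ∂P)
        = (∫ ω, φ i (S ω) *
            (C ω + β * (∑ j, θ j * φ j (S₁ ω)) - ∑ j, θ j * φ j (S ω)) ∂P)
          - (∫ ω, φ i (S ω) *
            (C ω + β * (∑ j, θstar j * φ j (S₁ ω)) - ∑ j, θstar j * φ j (S ω)) ∂P) := by
          rw [hfix i]; ring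
      _ = ∫ ω, (φ i (S ω) *
            (C ω + β * (∑ j, θ j * φ j (S₁ ω)) - ∑ j, θ j * φ j (S ω))
          - φ i (S ω) *
            (C ω + β * (∑ j, θstar j * φ j (S₁ ω)) - ∑ j, θstar j * φ j (S ω))) ∂P :=
          (integral_sub h1 h2).symm
      _ = ∫ ω, φ i (S ω) * (β * g ω - f ω) ∂P := by
          congr 1
          funext ω
          have hfsub : f ω = (∑ j, θ j * φ j (S ω)) - ∑ j, θstar j * φ j (S ω) := by
            simp [hf_def, hv_def, sub_mul, Finset.sum_sub_distrib]
          have hgsub : g ω = (∑ j, θ j * φ j (S₁ ω)) - ∑ j, θstar j * φ j (S₁ ω) := by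
            simp [hg_def, hv_def, sub_mul, Finset.sum_sub_distrib]
          rw [hfsub, hgsub]
          ring
  -- key identity: LHS = β ∫ f g − ∫ f²
  have hfg_int : Integrable (fun ω => f ω * g ω) P := l2_mul_integrable hfL2 hgL2
  have hff_int : Integrable (fun ω => f ω ^ 2) P := hfL2.integrable_sq
  have key : (∑ i, v i * ∫ ω, φ i (S ω) *
      (C ω + β * (∑ j, θ j * φ j (S₁ ω)) - ∑ j, θ j * φ j (S ω)) ∂P)
      = β * (∫ ω, f ω * g ω ∂P) - ∫ ω, f ω ^ 2 ∂P := by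
    have e1 : (∑ i, v i * ∫ ω, φ i (S ω) *
        (C ω + β * (∑ j, θ j * φ j (S₁ ω)) - ∑ j, θ j * φ j (S ω)) ∂P)
        = ∑ i, ∫ ω, v i * (φ i (S ω) * (β * g ω - f ω)) ∂P := by
      refine Finset.sum_congr rfl fun i _ => ?_
      rw [step i, ← integral_const_mul]
    rw [e1]
    have hInt : ∀ i ∈ Finset.univ, Integrable
        (fun ω => v i * (φ i (S ω) * (β * g ω - f ω))) P := by
      intro i _
      exact (l2_mul_integrable (hφS i) ((hgL2.const_mul β).sub hfL2)).const_mul (v i)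
    rw [← integral_finset_sum _ hInt]
    have e2 : ∀ ω, (∑ i, v i * (φ i (S ω) * (β * g ω - f ω)))
        = β * (f ω * g ω) - f ω ^ 2 := by
      intro ω
      simp_rw [← mul_assoc]
      rw [← Finset.sum_mul]
      show f ω * (β * g ω - f ω) = _
      ring
    simp_rw [e2]
    rw [integral_sub (hfg_int.const_mul β) hff_int, integral_const_mul]
  -- ∫ g² = ∫ f² by stationarity
  have hmeas : Measurable (fun x : 𝕊 => (∑ i, v i * φ i x) ^ 2) := by
    exact (Finset.measurable_sum _ fun i _ => (hφ i).const_mul (v i)).pow_const 2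
  have hgg : (∫ ω, g ω ^ 2 ∂P) = ∫ ω, f ω ^ 2 ∂P := by
    have e1 : (∫ ω, g ω ^ 2 ∂P) = ∫ x, (∑ i, v i * φ i x) ^ 2 ∂(P.map S₁) :=
      (integral_map hS₁.aemeasurable hmeas.aestronglyMeasurable).symm
    have e2 : (∫ ω, f ω ^ 2 ∂P) = ∫ x, (∑ i, v i * φ i x) ^ 2 ∂(P.map S) :=
      (integral_map hS.aemeasurable hmeas.aestronglyMeasurable).symm
    rw [e1, e2, hstat]
  -- Cauchy–Schwarz (via AM–GM): ∫ f g ≤ ∫ f²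
  have hgg_int : Integrable (fun ω => g ω ^ 2) P := hgL2.integrable_sq
  have hfg_le : (∫ ω, f ω * g ω ∂P) ≤ ∫ ω, f ω ^ 2 ∂P := by
    have hmono : (∫ ω, f ω * g ω ∂P) ≤ ∫ ω, (f ω ^ 2 + g ω ^ 2) / 2 ∂P := by
      refine integral_mono hfg_int ((hff_int.add hgg_int).div_const 2) fun ω => ?_
      nlinarith [sq_nonneg (f ω - g ω)]
    have : (∫ ω, (f ω ^ 2 + g ω ^ 2) / 2 ∂P)
        = ((∫ ω, f ω ^ 2 ∂P) + ∫ ω, g ω ^ 2 ∂P) / 2 := by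
      simp_rw [div_eq_mul_inv]
      rw [integral_mul_const, integral_add hff_int hgg_int]
    rw [this, hgg] at hmono
    linarith
  have hpos : 0 < ∫ ω, f ω ^ 2 ∂P := hindep v hv
  constructor
  · calc (∑ i, (θ i - θstar i) * ∫ ω, φ i (S ω) *
        (C ω + β * (∑ j, θ j * φ j (S₁ ω)) - ∑ j, θ j * φ j (S ω)) ∂P)
        = β * (∫ ω, f ω * g ω ∂P) - ∫ ω, f ω ^ 2 ∂P := key
      _ ≤ β * (∫ ω, f ω ^ 2 ∂P) - ∫ ω, f ω ^ 2 ∂P := by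
          have := mul_le_mul_of_nonneg_left hfg_le hβ0.le
          linarith
      _ = (β - 1) * ∫ ω, f ω ^ 2 ∂P := by ring
  · exact mul_neg_of_neg_of_pos (by linarith) hpos
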